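/- Let (X, δ) be a metric-like space, let I be an admissible ideal of subsets of ℕ, and let (x_n) be a sequence in X. If every subsequence of (x_n) (i.e. every sequence (x_{n_k}) with (n_k) strictly increasing) has a further subsequence that is I-convergent to x₀ ∈ X, then (x_n) itself is I-convergent to x₀. -/

import Mathlib

open Filter Topology

/-- A metric-like space structure on `X`. -/
structure MetricLike (X : Type*) where
  d : X → X → ℝ
  nonneg : ∀ x y, 0 ≤ d x y
  eq_of_eq_zero : ∀ x y, d x y = 0 → x = y
  symm : ∀ x y, d x y = d y x
  triangle : ∀ x y z, d x y ≤ d x z + d z y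

/-- `I` is an ideal of subsets of `ℕ`. -/
def IsIdeal (I : Set (Set ℕ)) : Prop :=
  ∅ ∈ I ∧ (∀ A B : Set ℕ, A ∈ I → B ∈ I → A ∪ B ∈ I) ∧
    (∀ A B : Set ℕ, A ∈ I → B ⊆ A → B ∈ I)

/-- `I` is an admissible ideal of subsets of `ℕ`. -/
def IsAdmissibleIdeal (I : Set (Set ℕ)) : Prop :=
  IsIdeal I ∧ (Set.univ : Set ℕ) ∉ I ∧ ∀ n : ℕ, ({n} : Set ℕ) ∈ I

/-- Usual convergence of a sequence in a metric-like space. -/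
def MLConv {X : Type*} (δ : MetricLike X) (x : ℕ → X) (x₀ : X) : Prop :=
  ∀ ε : ℝ, 0 < ε → ∃ k₀ : ℕ, ∀ n ≥ k₀, |δ.d (x n) x₀ - δ.d x₀ x₀| < ε

/-- `I`-convergence of a sequence in a metric-like space. -/
def MLIConv (I : Set (Set ℕ)) {X : Type*} (δ : MetricLike X) (x : ℕ → X) (x₀ : X) : Prop :=
  ∀ ε : ℝ, 0 < ε → {n : ℕ | ε ≤ |δ.d (x n) x₀ - δ.d x₀ x₀|} ∈ I

/-- `I*`-convergence of a sequence in a metric-like space: there is a set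
`M = {n₁ < n₂ < …}` in the filter `F(I)` (i.e. with complement in `I`) such that
`δ(x_{n_k}, x₀) → δ(x₀, x₀)`. -/
def MLIStarConv (I : Set (Set ℕ)) {X : Type*} (δ : MetricLike X) (x : ℕ → X) (x₀ : X) : Prop :=
  ∃ M : Set ℕ, Mᶜ ∈ I ∧ ∃ nk : ℕ → ℕ, StrictMono nk ∧ Set.range nk = M ∧
    Tendsto (fun k => δ.d (x (nk k)) x₀) atTop (𝓝 (δ.d x₀ x₀))

/-- The open `δ`-ball with centre `c` and radius `ε`. -/
def MLBall {X : Type*} (δ : MetricLike X) (c : X) (ε : ℝ) : Set X :=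
  {x : X | |δ.d x c - δ.d c c| < ε}

/-- The `T₀` separation axiom for a metric-like space. -/
def MLT0 {X : Type*} (δ : MetricLike X) : Prop :=
  ∀ x y : X, x ≠ y → ∃ (c : X) (ε : ℝ), 0 < ε ∧
    ((x ∈ MLBall δ c ε ∧ y ∉ MLBall δ c ε) ∨ (y ∈ MLBall δ c ε ∧ x ∉ MLBall δ c ε))

/-- `x₀` is a limit point of the metric-like space `X`. -/
def MLLimitPoint {X : Type*} (δ : MetricLike X) (x₀ : X) : Prop :=
  ∀ r : ℝ, 0 < r → (MLBall δ x₀ r ∩ {x₀}ᶜ).Nonempty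

/-- `x₀` is an isolated point of the metric-like space `X`. -/
def MLIsolated {X : Type*} (δ : MetricLike X) (x₀ : X) : Prop :=
  ∃ r : ℝ, 0 < r ∧ MLBall δ x₀ r = {x₀}

/-- The condition (AP) for an ideal of subsets of `ℕ`. -/
def HasAP (I : Set (Set ℕ)) : Prop :=
  ∀ A : ℕ → Set ℕ, (∀ j, A j ∈ I) → (∀ i j, i ≠ j → Disjoint (A i) (A j)) →
    ∃ B : ℕ → Set ℕ, (∀ j, (symmDiff (A j) (B j)).Finite) ∧ (⋃ j, B j) ∈ I

theorem ideal_convergent_of_subseq_of_subseq {X : Type*} (δ : MetricLike X)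
    (I : Set (Set ℕ)) (hI : IsAdmissibleIdeal I) (x : ℕ → X) (x₀ : X)
    (h : ∀ nk : ℕ → ℕ, StrictMono nk →
      ∃ mk : ℕ → ℕ, StrictMono mk ∧ MLIConv I δ (fun k => x (nk (mk k))) x₀) :
    MLIConv I δ x x₀ := by
  obtain ⟨⟨hempty, hunion, hsub⟩, huniv, hsingle⟩ := hI
  have hfin : ∀ A : Set ℕ, A.Finite → A ∈ I := by
    intro A hA
    refine Set.Finite.induction_on (motive := fun A _ => A ∈ I) A hA hempty ?_
    intro a s _ _ ih
    have : insert a s = {a} ∪ s := by simp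
    rw [this]
    exact hunion _ _ (hsingle a) ih
  intro ε hε
  by_contra hA
  set A := {n : ℕ | ε ≤ |δ.d (x n) x₀ - δ.d x₀ x₀|} with hAdef
  have hAinf : A.Infinite := by
    intro hfinA
    exact hA (hfin A hfinA)
  have hmono : StrictMono (Nat.nth A) := Nat.nth_strictMono hAinf
  obtain ⟨mk, hmk, hconv⟩ := h (Nat.nth A) hmono
  have hS := hconv ε hε
  have : (Set.univ : Set ℕ) ∈ I := by
    refine hsub _ _ hS ?_
    intro k _
    exact Nat.nth_mem_of_infinite hAinf (mk k)
  exact huniv this
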